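/- arXiv:1904.10457 — 2 statements merged into one kernel-verified Lean document; each statement's English description precedes it below -/
import Mathlib

section
/- Let G be a discrete abelian group and 𝒜 : ℓ²(G)^N → ℓ²(G)^M a bounded linear operator that commutes with all translations T_g. Then there exists a unique M×N matrix A with entries in ℓ²(G) such that 𝒜(x) = A ∗ x for all x ∈ ℓ²(G)^N; moreover each entry of the Fourier transform matrix Â lies in L^∞(Ĝ), and the entries of A are given explicitly by a_{m,n} = [𝒜(δ e_n)]_m, where δ is the Dirac delta at the identity of G and e_n is the n-th standard basis vector. -/
set_option linter.unusedSectionVars false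


open MeasureTheory Complex Filter Topology
open scoped ENNReal ComplexOrder

set_option maxHeartbeats 1000000
set_option synthInstance.maxHeartbeats 400000

noncomputable section

/-- Discrete convolution of two complex-valued functions on a discrete abelian group `G`:
`(x ∗ y)(h) = ∑_{g ∈ G} x(g) y(h - g)`. -/
def conv {G : Type*} [AddCommGroup G] (x y : G → ℂ) : G → ℂ :=
  fun h => ∑' g, x g * y (h - g)

/-- `ℓ²(G)` with complex values. -/
abbrev ell2 (G : Type*) [AddCommGroup G] : Type _ := lp (fun _ : G => ℂ) 2

/-- Componentwise matrix convolution: `[A ∗ x]_m = ∑_n a_{m,n} ∗ x_n`. -/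
def matConv {G : Type*} [AddCommGroup G] {M N : ℕ}
    (A : Fin M → Fin N → G → ℂ) (x : Fin N → G → ℂ) : Fin M → G → ℂ :=
  fun m h => ∑ n, conv (A m n) (x n) h

theorem memℓp_translate {G : Type*} [AddCommGroup G] (g : G) (x : ell2 G) :
    Memℓp (fun h => (x : G → ℂ) (h - g)) 2 := by
  have hx : Summable (fun h : G => ‖(x : G → ℂ) h‖ ^ (2 : ℝ≥0∞).toReal) :=
    Memℓp.summable (by simp) (lp.memℓp x)
  have h2 : Summable (fun h : G => ‖(x : G → ℂ) (h - g)‖ ^ (2 : ℝ≥0∞).toReal) :=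
    (Equiv.subRight g).summable_iff.mpr hx
  exact memℓp_gen h2

/-- The translation operator `T_g` on `ℓ²(G)`: `(T_g x)(h) = x(h - g)`. -/
def translLp {G : Type*} [AddCommGroup G] (g : G) (x : ell2 G) : ell2 G :=
  ⟨fun h => (x : G → ℂ) (h - g), memℓp_translate g x⟩

section Aux

variable {G : Type*} [AddCommGroup G] [DecidableEq G]

lemma translLp_coe (g : G) (x : ell2 G) (h : G) : (translLp g x : G → ℂ) h = x (h - g) := rfl

lemma translLp_zero (g : G) : translLp g (0 : ell2 G) = 0 :=
  lp.ext (funext fun h => by simp [translLp_coe, lp.coeFn_zero])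

lemma translLp_add (g : G) (x y : ell2 G) :
    translLp g (x + y) = translLp g x + translLp g y :=
  lp.ext (funext fun h => by simp [translLp_coe, lp.coeFn_add])

lemma translLp_smul (g : G) (c : ℂ) (x : ell2 G) :
    translLp g (c • x) = c • translLp g x :=
  lp.ext (funext fun h => by simp [translLp_coe, lp.coeFn_smul])

lemma single_coe (g : G) (c : ℂ) (h : G) :
    (lp.single 2 g c : G → ℂ) h = if h = g then c else 0 := by
  rw [lp.single_apply]
  by_cases hh : h = g
  · subst hh; simp
  · simp [hh]

lemma single_smul_one (g : G) (c : ℂ) :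
    c • (lp.single 2 g (1 : ℂ) : ell2 G) = lp.single 2 g c := by
  apply lp.ext; funext h
  simp [lp.coeFn_smul, single_coe, mul_ite, mul_one, mul_zero, Pi.single_apply]

lemma translLp_single (g g' : G) (c : ℂ) :
    translLp g (lp.single 2 g' c) = lp.single 2 (g + g') c := by
  apply lp.ext; funext h
  simp [translLp_coe, single_coe, sub_eq_iff_eq_add', Pi.single_apply]

lemma norm_translLp (g : G) (x : ell2 G) : ‖translLp g x‖ = ‖x‖ := by
  have h2 : 0 < (2 : ℝ≥0∞).toReal := by norm_num
  have ha := lp.norm_rpow_eq_tsum h2 (translLp g x)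
  have hb := lp.norm_rpow_eq_tsum h2 x
  have hre : (∑' h, ‖(translLp g x : G → ℂ) h‖ ^ (2 : ℝ≥0∞).toReal)
      = ∑' h, ‖(x : G → ℂ) h‖ ^ (2 : ℝ≥0∞).toReal := by
    have := (Equiv.subRight g).tsum_eq
      (fun h => ‖(x : G → ℂ) h‖ ^ (2 : ℝ≥0∞).toReal)
    simpa [translLp_coe] using this
  refine Real.rpow_left_injOn h2.ne' (norm_nonneg _) (norm_nonneg _) ?_
  show ‖translLp g x‖ ^ (2 : ℝ≥0∞).toReal = ‖x‖ ^ (2 : ℝ≥0∞).toReal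
  rw [ha, hb, hre]

def translL (g : G) : ell2 G →L[ℂ] ell2 G :=
  LinearMap.mkContinuous
    { toFun := translLp g
      map_add' := translLp_add g
      map_smul' := translLp_smul g }
    1 (fun x => by
      show ‖translLp g x‖ ≤ 1 * ‖x‖
      rw [norm_translLp]; simp)

@[simp] lemma translL_apply (g : G) (x : ell2 G) : translL g x = translLp g x := rfl

def evalL (h : G) : ell2 G →L[ℂ] ℂ :=
  LinearMap.mkContinuous
    { toFun := fun x => (x : G → ℂ) h
      map_add' := fun x y => by simp [lp.coeFn_add]
      map_smul' := fun c x => by simp [lp.coeFn_smul] }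
    1 (fun x => by
      show ‖(x : G → ℂ) h‖ ≤ 1 * ‖x‖
      simpa using lp.norm_apply_le_norm (by norm_num : (2:ℝ≥0∞) ≠ 0) x h)

@[simp] lemma evalL_apply (h : G) (x : ell2 G) : evalL h x = (x : G → ℂ) h := rfl

lemma dense_span_single :
    Dense ((Submodule.span ℂ (Set.range fun g : G => lp.single 2 g (1 : ℂ)) :
      Submodule ℂ (ell2 G)) : Set (ell2 G)) := by
  intro x
  refine mem_closure_of_tendsto (lp.hasSum_single (by norm_num) x) ?_
  filter_upwards with s
  refine Submodule.sum_mem _ (fun g _ => ?_)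
  rw [← single_smul_one]
  exact Submodule.smul_mem _ _ (Submodule.subset_span ⟨g, rfl⟩)

end Aux

section Aux2

variable {G : Type*} [AddCommGroup G] [DecidableEq G]

def embL (N : ℕ) (n : Fin N) : ell2 G →L[ℂ] PiLp 2 (fun _ : Fin N => ell2 G) :=
  LinearMap.mkContinuous
    ((WithLp.linearEquiv 2 ℂ (∀ _ : Fin N, ell2 G)).symm.toLinearMap.comp
      (LinearMap.single ℂ (fun _ : Fin N => ell2 G) n))
    1 (fun y => by
      show ‖(WithLp.linearEquiv 2 ℂ (∀ _ : Fin N, ell2 G)).symm (Pi.single n y)‖ ≤ 1 * ‖y‖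
      rw [one_mul]
      have h2 : 0 < (2 : ℝ≥0∞).toReal := by norm_num
      rw [PiLp.norm_eq_sum h2]
      have hsum : (∑ i, ‖Pi.single (M := fun _ : Fin N => ell2 G) n y i‖ ^ (2:ℝ≥0∞).toReal)
          = ‖y‖ ^ (2:ℝ≥0∞).toReal := by
        rw [Finset.sum_eq_single n]
        · simp
        · intro i _ hi
          rw [Pi.single_eq_of_ne hi]
          simp [Real.zero_rpow h2.ne']
        · simp
      simp only [WithLp.linearEquiv_symm_apply, WithLp.equiv_symm_apply, PiLp.toLp_apply]
      change (∑ i, ‖Pi.single (M := fun _ : Fin N => ell2 G) n y i‖ ^ (2:ℝ≥0∞).toReal) ^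
        (1 / (2:ℝ≥0∞).toReal) ≤ ‖y‖
      rw [hsum, ← Real.rpow_mul (norm_nonneg _)]
      rw [show (2:ℝ≥0∞).toReal * (1 / (2:ℝ≥0∞).toReal) = 1 by norm_num]
      rw [Real.rpow_one])

lemma embL_apply (N : ℕ) (n : Fin N) (y : ell2 G) :
    embL N n y = (WithLp.equiv 2 (∀ _ : Fin N, ell2 G)).symm
      (fun n' => if n' = n then y else 0) := by
  show (WithLp.equiv 2 (∀ _ : Fin N, ell2 G)).symm (Pi.single n y) = _
  exact congrArg _ (funext fun n' => by simp [Pi.single_apply])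

lemma embL_decomp {N : ℕ} (x : PiLp 2 (fun _ : Fin N => ell2 G)) :
    ∑ n, embL N n (x n) = x := by
  apply (PiLp.continuousLinearEquiv 2 ℂ (fun _ : Fin N => ell2 G)).injective
  rw [map_sum]
  funext n'
  have : ∀ n, (PiLp.continuousLinearEquiv 2 ℂ (fun _ : Fin N => ell2 G)) (embL N n (x n))
      = Pi.single n (x n) := fun n => rfl
  simp only [Finset.sum_apply, this]
  rw [Finset.sum_pi_single]
  simp

end Aux2

section Aux3

variable {Gd : Type*} [MeasurableSpace Gd] (μ : Measure Gd)

lemma memℒp_mul_unit {u f : Gd → ℂ} (hu : AEStronglyMeasurable u μ)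
    (h1 : ∀ᵐ ξ ∂μ, ‖u ξ‖ = 1) (hf : MemLp f 2 μ) : MemLp (u * f) 2 μ := by
  refine ⟨hu.mul hf.1, ?_⟩
  have heq : eLpNorm (u * f) 2 μ = eLpNorm f 2 μ :=
    eLpNorm_congr_norm_ae (h1.mono fun ξ h => by
      simp [Pi.mul_apply, norm_mul, h, one_mul])
  rw [heq]; exact hf.2

lemma eLpNorm_mul_unit {u f : Gd → ℂ} (h1 : ∀ᵐ ξ ∂μ, ‖u ξ‖ = 1) :
    eLpNorm (u * f) 2 μ = eLpNorm f 2 μ :=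
  eLpNorm_congr_norm_ae (h1.mono fun ξ h => by simp [Pi.mul_apply, norm_mul, h, one_mul])

def mulU (u : Lp ℂ 2 μ) (h1 : ∀ᵐ ξ ∂μ, ‖(u : Gd → ℂ) ξ‖ = 1) :
    Lp ℂ 2 μ →L[ℂ] Lp ℂ 2 μ :=
  LinearMap.mkContinuous
    { toFun := fun f =>
        (memℒp_mul_unit μ (Lp.aestronglyMeasurable u) h1 (Lp.memLp f)).toLp _
      map_add' := fun f g => by
        apply Lp.ext
        refine (MemLp.coeFn_toLp
          (memℒp_mul_unit μ (Lp.aestronglyMeasurable u) h1 (Lp.memLp (f + g)))).trans ?_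
        have h2 := MemLp.coeFn_toLp
          (memℒp_mul_unit μ (Lp.aestronglyMeasurable u) h1 (Lp.memLp f))
        have h3 := MemLp.coeFn_toLp
          (memℒp_mul_unit μ (Lp.aestronglyMeasurable u) h1 (Lp.memLp g))
        have h4 := Lp.coeFn_add f g
        have h5 := Lp.coeFn_add
          ((memℒp_mul_unit μ (Lp.aestronglyMeasurable u) h1 (Lp.memLp f)).toLp _)
          ((memℒp_mul_unit μ (Lp.aestronglyMeasurable u) h1 (Lp.memLp g)).toLp _)
        filter_upwards [h2, h3, h4, h5] with ξ e2 e3 e4 e5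
        simp only [Pi.add_apply, Pi.mul_apply, e4, e5, e2, e3, mul_add]
      map_smul' := fun c f => by
        apply Lp.ext
        refine (MemLp.coeFn_toLp
          (memℒp_mul_unit μ (Lp.aestronglyMeasurable u) h1 (Lp.memLp (c • f)))).trans ?_
        have h2 := MemLp.coeFn_toLp
          (memℒp_mul_unit μ (Lp.aestronglyMeasurable u) h1 (Lp.memLp f))
        have h4 := Lp.coeFn_smul c f
        have h5 := Lp.coeFn_smul c
          ((memℒp_mul_unit μ (Lp.aestronglyMeasurable u) h1 (Lp.memLp f)).toLp _)
        filter_upwards [h2, h4, h5] with ξ e2 e4 e5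
        simp only [RingHom.id_apply, Pi.smul_apply, Pi.mul_apply, e4, e5, e2,
          smul_eq_mul]
        ring }
    1 (fun f => by
      show ‖MemLp.toLp ((u : Gd → ℂ) * (f : Gd → ℂ))
        (memℒp_mul_unit μ (Lp.aestronglyMeasurable u) h1 (Lp.memLp f))‖ ≤ 1 * ‖f‖
      rw [Lp.norm_toLp, eLpNorm_mul_unit μ h1, one_mul, Lp.norm_def])

lemma mulU_coe (u : Lp ℂ 2 μ) (h1 : ∀ᵐ ξ ∂μ, ‖(u : Gd → ℂ) ξ‖ = 1) (f : Lp ℂ 2 μ) :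
    (mulU μ u h1 f : Gd → ℂ) =ᵐ[μ] (u : Gd → ℂ) * (f : Gd → ℂ) :=
  MemLp.coeFn_toLp (memℒp_mul_unit μ (Lp.aestronglyMeasurable u) h1 (Lp.memLp f))

end Aux3


/-- A bounded operator `𝒜 : ℓ²(G)^N → ℓ²(G)^M` commuting with all
translations is given by convolution with a unique matrix `A ∈ M_{M×N}(ℓ²(G))`; moreover
each entry of `Â` is essentially bounded and `a_{m,n} = [𝒜(δ e_n)]_m`. -/
theorem stmt_3 {G : Type*} [AddCommGroup G] [DecidableEq G]
    {Gd : Type*} [MeasurableSpace Gd] (μ : Measure Gd) [IsProbabilityMeasure μ]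
    (e : AddChar G (Gd → ℂ)) (he : ∀ g ξ, ‖e g ξ‖ = 1)
    (F : lp (fun _ : G => ℂ) 2 ≃ₗᵢ[ℂ] Lp ℂ 2 μ)
    (hF : ∀ g : G, (F (lp.single 2 g 1) : Gd → ℂ) =ᵐ[μ] e (-g))
    {M N : ℕ}
    (𝒜 : PiLp 2 (fun _ : Fin N => ell2 G) →L[ℂ] PiLp 2 (fun _ : Fin M => ell2 G))
    (hcomm : ∀ (g : G) (x : PiLp 2 (fun _ : Fin N => ell2 G)),
      𝒜 ((WithLp.equiv 2 _).symm fun n => translLp g (x n)) =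
        (WithLp.equiv 2 _).symm fun m => translLp g (𝒜 x m)) :
    ∃ A : Fin M → Fin N → ell2 G,
      (∀ (x : PiLp 2 (fun _ : Fin N => ell2 G)) (m : Fin M),
          ((𝒜 x m : G → ℂ)) =
            matConv (fun m n => (A m n : G → ℂ)) (fun n => (x n : G → ℂ)) m) ∧
      (∀ A' : Fin M → Fin N → ell2 G,
          (∀ (x : PiLp 2 (fun _ : Fin N => ell2 G)) (m : Fin M),
              ((𝒜 x m : G → ℂ)) =
                matConv (fun m n => (A' m n : G → ℂ)) (fun n => (x n : G → ℂ)) m) → A' = A) ∧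
      (∀ m n, MemLp (F (A m n) : Gd → ℂ) ∞ μ) ∧
      (∀ m n, A m n =
        𝒜 ((WithLp.equiv 2 _).symm fun n' =>
            if n' = n then lp.single 2 (0 : G) (1 : ℂ) else 0) m) := by
  classical
  set A : Fin M → Fin N → ell2 G := fun m n =>
    𝒜 ((WithLp.equiv 2 _).symm fun n' =>
        if n' = n then lp.single 2 (0 : G) (1 : ℂ) else 0) m with hAdef
  -- key translation property
  have hkey : ∀ (n : Fin N) (g : G) (m : Fin M),
      𝒜 ((WithLp.equiv 2 (∀ _ : Fin N, ell2 G)).symm fun n' =>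
          if n' = n then lp.single 2 g (1 : ℂ) else 0) m = translLp g (A m n) := by
    intro n g m
    have h1 := hcomm g ((WithLp.equiv 2 _).symm fun n' =>
      if n' = n then lp.single 2 (0 : G) (1 : ℂ) else 0)
    have harg : ((WithLp.equiv 2 (∀ _ : Fin N, ell2 G)).symm fun n' =>
        translLp g (((WithLp.equiv 2 (∀ _ : Fin N, ell2 G)).symm fun n'' =>
          if n'' = n then lp.single 2 (0 : G) (1 : ℂ) else 0) n'))
        = ((WithLp.equiv 2 (∀ _ : Fin N, ell2 G)).symm fun n' =>
            if n' = n then lp.single 2 g (1 : ℂ) else 0) := by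
      refine congrArg _ (funext fun n' => ?_)
      simp only [WithLp.equiv_symm_apply, PiLp.toLp_apply]
      rw [apply_ite (translLp g), translLp_single, add_zero, translLp_zero]
    rw [harg] at h1
    rw [h1, hAdef]
    exact congrFun rfl m
  have hembE : ∀ (n : Fin N) (g : G),
      embL N n (lp.single 2 g (1 : ℂ)) = (WithLp.equiv 2 (∀ _ : Fin N, ell2 G)).symm
        fun n' => if n' = n then lp.single 2 g (1 : ℂ) else 0 :=
    fun n g => embL_apply N n _
  -- Statement 1: the convolution formula
  have hconv : ∀ (x : PiLp 2 fun _ : Fin N => ell2 G) (m : Fin M),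
      ((𝒜 x m : G → ℂ)) = matConv (fun m n => (A m n : G → ℂ))
        (fun n => (x n : G → ℂ)) m := by
    intro x m
    funext h
    set Φ : PiLp 2 (fun _ : Fin N => ell2 G) →L[ℂ] ℂ :=
      (evalL h).comp ((PiLp.proj (𝕜 := ℂ) 2 (fun _ : Fin M => ell2 G) m).comp 𝒜) with hΦ
    have hterm : ∀ n, Φ (embL N n (x n))
        = ∑' g, (x n : G → ℂ) g * (A m n : G → ℂ) (h - g) := by
      intro n
      have hsum := lp.hasSum_single (by norm_num : (2 : ℝ≥0∞) ≠ ⊤) (x n)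
      have h2 := hsum.mapL (Φ.comp (embL N n))
      have hts : (fun g : G => (Φ.comp (embL N n)) (lp.single 2 g ((x n : G → ℂ) g)))
          = fun g : G => (x n : G → ℂ) g * (A m n : G → ℂ) (h - g) := by
        funext g
        rw [← single_smul_one]
        simp only [_root_.map_smul]
        simp only [ContinuousLinearMap.comp_apply, hembE n g]
        rw [hΦ]
        simp only [ContinuousLinearMap.comp_apply, PiLp.proj_apply, evalL_apply]
        rw [hkey n g m, translLp_coe, smul_eq_mul]
      rw [hts] at h2
      exact h2.tsum_eq.symm
    have hLHS : (𝒜 x m : G → ℂ) h = ∑ n, Φ (embL N n (x n)) := by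
      have h0 : (𝒜 x m : G → ℂ) h = Φ x := rfl
      rw [h0]
      conv_lhs => rw [← embL_decomp x]
      rw [map_sum]
    rw [hLHS]
    show _ = ∑ n, conv ((A m n : G → ℂ)) ((x n : G → ℂ)) h
    refine Finset.sum_congr rfl fun n _ => ?_
    rw [hterm n]
    show _ = ∑' g, (A m n : G → ℂ) g * (x n : G → ℂ) (h - g)
    rw [← (Equiv.subLeft h).tsum_eq
      (fun g => (x n : G → ℂ) g * (A m n : G → ℂ) (h - g))]
    refine tsum_congr fun g => ?_
    simp only [Equiv.subLeft_apply, sub_sub_cancel]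
    ring
  refine ⟨A, hconv, ?_, ?_, fun m n => by rw [hAdef]⟩
  · -- uniqueness
    intro A' hA'
    funext m n
    apply lp.ext; funext h
    have hdelta : ∀ B : Fin M → Fin N → ell2 G,
        matConv (fun m n => (B m n : G → ℂ))
          (fun n' => ((((WithLp.equiv 2 (∀ _ : Fin N, ell2 G)).symm fun n'' =>
            if n'' = n then lp.single 2 (0 : G) (1 : ℂ) else 0) : PiLp 2 _) n' : G → ℂ)) m h
          = (B m n : G → ℂ) h := by
      intro B
      show (∑ n', conv _ _ h) = _
      rw [Finset.sum_eq_single n]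
      · have hco : ((((WithLp.equiv 2 (∀ _ : Fin N, ell2 G)).symm fun n'' =>
            if n'' = n then lp.single 2 (0 : G) (1 : ℂ) else 0) : PiLp 2 _) n : G → ℂ)
            = fun t => if t = 0 then 1 else 0 := by
          simp only [WithLp.equiv_symm_apply, PiLp.toLp_apply, if_pos rfl]
          funext t; exact single_coe 0 1 t
        rw [hco]
        show (∑' g, (B m n : G → ℂ) g * (if h - g = 0 then (1:ℂ) else 0)) = _
        rw [tsum_eq_single h ?_]
        · simp
        · intro g hg
          rw [if_neg (fun hc => hg (sub_eq_zero.mp hc).symm), mul_zero]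
      · intro n' _ hn'
        have hco : ((((WithLp.equiv 2 (∀ _ : Fin N, ell2 G)).symm fun n'' =>
            if n'' = n then lp.single 2 (0 : G) (1 : ℂ) else 0) : PiLp 2 _) n' : G → ℂ) = 0 := by
          simp only [WithLp.equiv_symm_apply, PiLp.toLp_apply, if_neg hn', lp.coeFn_zero]
        rw [hco]
        show (∑' g, (B m n' : G → ℂ) g * (0 : G → ℂ) (h - g)) = 0
        simp
      · simp
    have h1 := congrFun (hA' ((WithLp.equiv 2 (∀ _ : Fin N, ell2 G)).symm fun n'' =>
      if n'' = n then lp.single 2 (0 : G) (1 : ℂ) else 0) m) h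
    have h2 := congrFun (hconv ((WithLp.equiv 2 (∀ _ : Fin N, ell2 G)).symm fun n'' =>
      if n'' = n then lp.single 2 (0 : G) (1 : ℂ) else 0) m) h
    rw [hdelta A'] at h1
    rw [hdelta A] at h2
    rw [← h1, h2]
  · -- essential boundedness of the Fourier transforms
    intro m n
    set B : ell2 G →L[ℂ] ell2 G :=
      ((PiLp.proj (𝕜 := ℂ) 2 (fun _ : Fin M => ell2 G) m).comp (𝒜.comp (embL N n))) with hBdef
    set C : ℝ := ‖B‖ with hCdef
    have hC0 : (0:ℝ) ≤ C := norm_nonneg _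
    set a : ell2 G := A m n with hadef
    have hBsingle : ∀ g : G, B (lp.single 2 g (1:ℂ)) = translLp g a := by
      intro g
      have h0 : B (lp.single 2 g (1:ℂ)) = 𝒜 (embL N n (lp.single 2 g (1:ℂ))) m := rfl
      rw [h0, hembE n g, hkey n g m]
    set FL : ell2 G →L[ℂ] Lp ℂ 2 μ := F.toLinearIsometry.toContinuousLinearMap with hFLdef
    have hFLapp : ∀ y : ell2 G, FL y = F y := fun y => rfl
    set u : G → Lp ℂ 2 μ := fun g => F (lp.single 2 g 1) with hudef
    have hu1 : ∀ g : G, ∀ᵐ ξ ∂μ, ‖(u g : Gd → ℂ) ξ‖ = 1 := fun g =>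
      (hF g).mono fun ξ hξ => by rw [hξ]; exact he (-g) ξ
    have hFtrans : ∀ g : G, FL.comp (translL g) = (mulU μ (u g) (hu1 g)).comp FL := by
      intro g
      refine ContinuousLinearMap.ext_on (dense_span_single (G := G)) ?_
      rintro _ ⟨g', rfl⟩
      have hL : (FL.comp (translL g)) (lp.single 2 g' (1:ℂ))
          = F (lp.single 2 (g + g') (1:ℂ)) := by
        rw [ContinuousLinearMap.comp_apply, translL_apply, translLp_single]
        exact hFLapp _
      have hR : ((mulU μ (u g) (hu1 g)).comp FL) (lp.single 2 g' (1:ℂ))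
          = mulU μ (u g) (hu1 g) (u g') := rfl
      rw [hL, hR]
      apply Lp.ext
      have hchar : e (-(g + g')) = e (-g) * e (-g') := by
        rw [neg_add, AddChar.map_add_eq_mul]
      filter_upwards [hF (g + g'), hF g, hF g', mulU_coe μ (u g) (hu1 g) (u g')]
        with ξ e1 e2 e3 e4
      rw [e1, e4, hchar]
      simp only [Pi.mul_apply]
      rw [e2, e3]
    have hnormB : ∀ y : ell2 G, ‖F (B y)‖ ≤ C * ‖F y‖ := fun y => by
      rw [F.norm_map, F.norm_map]; exact B.le_opNorm y
    have hmulspan : ∀ y ∈ Submodule.span ℂ (Set.range fun g : G => lp.single 2 g (1:ℂ)),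
        (F (B y) : Gd → ℂ) =ᵐ[μ] (F y : Gd → ℂ) * (F a : Gd → ℂ) := by
      intro y hy
      induction hy using Submodule.span_induction with
      | mem z hz =>
        obtain ⟨g, rfl⟩ := hz
        rw [hBsingle g]
        have h5 : F (translLp g a) = mulU μ (u g) (hu1 g) (F a) :=
          DFunLike.congr_fun (hFtrans g) a
        rw [h5]
        filter_upwards [mulU_coe μ (u g) (hu1 g) (F a)] with ξ e4
        rw [e4]
      | zero =>
        simp only [map_zero]
        filter_upwards [Lp.coeFn_zero (E := ℂ) (p := 2) (μ := μ)] with ξ e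
        simp [e]
      | add p q hp hq ihp ihq =>
        simp only [map_add]
        filter_upwards [ihp, ihq, Lp.coeFn_add (F (B p)) (F (B q)),
          Lp.coeFn_add (F p) (F q)] with ξ e1 e2 e3 e4
        simp only [Pi.add_apply, Pi.mul_apply] at *
        rw [e3, e4, e1, e2]
        ring
      | smul c p hp ihp =>
        simp only [_root_.map_smul]
        filter_upwards [ihp, Lp.coeFn_smul c (F (B p)), Lp.coeFn_smul c (F p)]
          with ξ e1 e2 e3
        simp only [Pi.smul_apply, Pi.mul_apply, smul_eq_mul] at *
        rw [e2, e3, e1]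
        ring
    -- measurable representative
    refine memLp_top_of_bound (Lp.aestronglyMeasurable (F a)) C ?_
    set b : Gd → ℂ := (Lp.aestronglyMeasurable (F a)).mk _ with hbdef
    have hab : (F a : Gd → ℂ) =ᵐ[μ] b := (Lp.aestronglyMeasurable (F a)).ae_eq_mk
    have hbm : StronglyMeasurable b := (Lp.aestronglyMeasurable (F a)).stronglyMeasurable_mk
    have hEk : ∀ k : ℕ, μ {ξ | C + 1/(k+1 : ℝ) ≤ ‖b ξ‖} = 0 := by
      intro k
      set ε : ℝ := 1/(k+1 : ℝ) with hedef
      have hε : 0 < ε := by positivity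
      set E : Set Gd := {ξ | C + ε ≤ ‖b ξ‖} with hEdef
      have hE : MeasurableSet E := measurableSet_le measurable_const hbm.norm.measurable
      by_contra hμE
      set f : Gd → ℂ := E.indicator (fun _ => (1:ℂ)) with hfdef
      have hf2 : MemLp f 2 μ := memLp_indicator_const 2 hE (1:ℂ) (Or.inr (measure_ne_top μ E))
      set fL : Lp ℂ 2 μ := hf2.toLp f with hfLdef
      have hDcl : fL ∈ closure (⇑F '' ((Submodule.span ℂ
          (Set.range fun g : G => lp.single 2 g (1:ℂ)) : Submodule ℂ (ell2 G)) :
            Set (ell2 G))) := by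
        have h0 : fL = F (F.symm fL) := (F.apply_symm_apply fL).symm
        rw [h0]
        exact image_closure_subset_closure_image F.continuous
          (Set.mem_image_of_mem F (dense_span_single _))
      rw [mem_closure_iff_seq_limit] at hDcl
      obtain ⟨q, hqmem, hqlim⟩ := hDcl
      choose y hymem hyq using hqmem
      set w : ℕ → Lp ℂ 2 μ := fun k => F (B (y k)) with hwdef
      have hwq : ∀ j l : ℕ, ‖w j - w l‖ ≤ C * ‖q j - q l‖ := by
        intro j l
        have h1 : w j - w l = F (B (y j - y l)) := by rw [map_sub, map_sub]
        have h2 : q j - q l = F (y j - y l) := by rw [map_sub, hyq, hyq]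
        rw [h1, h2]
        exact hnormB _
      have hwc : CauchySeq w := by
        rw [Metric.cauchySeq_iff]
        intro δ hδ
        have hqc := hqlim.cauchySeq
        rw [Metric.cauchySeq_iff] at hqc
        obtain ⟨K, hK⟩ := hqc (δ / (C+1)) (by positivity)
        refine ⟨K, fun j hj l hl => ?_⟩
        have hjl := hK j hj l hl
        have hfin : (C+1) * (δ/(C+1)) = δ := by field_simp
        calc dist (w j) (w l) = ‖w j - w l‖ := dist_eq_norm _ _
          _ ≤ C * ‖q j - q l‖ := hwq j l
          _ = C * dist (q j) (q l) := by rw [dist_eq_norm]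
          _ ≤ C * (δ/(C+1)) := mul_le_mul_of_nonneg_left hjl.le hC0
          _ < (C+1) * (δ/(C+1)) := by
              apply mul_lt_mul_of_pos_right _ (by positivity)
              linarith
          _ = δ := hfin
      obtain ⟨winf, hwinf⟩ := cauchySeq_tendsto_of_complete hwc
      have hweq : ∀ᵐ ξ ∂μ, ∀ k : ℕ, (w k : Gd → ℂ) ξ
          = (q k : Gd → ℂ) ξ * (F a : Gd → ℂ) ξ := by
        rw [MeasureTheory.ae_all_iff]
        intro k
        have hk := hmulspan (y k) (hymem k)
        rw [hyq k] at hk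
        exact hk
      have hTIM : ∀ (v : ℕ → Lp ℂ 2 μ) (vl : Lp ℂ 2 μ), Tendsto v atTop (𝓝 vl) →
          TendstoInMeasure μ (fun k => (v k : Gd → ℂ)) atTop (vl : Gd → ℂ) := by
        intro v vl hv
        refine tendstoInMeasure_of_tendsto_eLpNorm (p := 2) (by norm_num)
          (fun k => Lp.aestronglyMeasurable _) (Lp.aestronglyMeasurable _) ?_
        have heq : ∀ k, eLpNorm ((v k : Gd → ℂ) - (vl : Gd → ℂ)) 2 μ
            = ENNReal.ofReal ‖v k - vl‖ := by
          intro k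
          rw [← eLpNorm_congr_ae (Lp.coeFn_sub (v k) vl), Lp.norm_def,
            ENNReal.ofReal_toReal (Lp.eLpNorm_lt_top _).ne]
        simp only [heq]
        have hn : Tendsto (fun k => ‖v k - vl‖) atTop (𝓝 0) :=
          tendsto_iff_norm_sub_tendsto_zero.mp hv
        have h6 := (ENNReal.continuous_ofReal.tendsto 0).comp hn
        simpa [Function.comp_def] using h6
      obtain ⟨φ, hφmono, hφae⟩ := (hTIM q fL hqlim).exists_seq_tendsto_ae
      have hwφ : Tendsto (fun k => w (φ k)) atTop (𝓝 winf) :=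
        hwinf.comp (hφmono.tendsto_atTop)
      obtain ⟨ψ, hψmono, hψae⟩ := (hTIM (fun k => w (φ k)) winf hwφ).exists_seq_tendsto_ae
      have hwinfeq : (winf : Gd → ℂ) =ᵐ[μ] (fL : Gd → ℂ) * (F a : Gd → ℂ) := by
        filter_upwards [hφae, hψae, hweq] with ξ h1 h2 h3
        have h1' : Tendsto (fun k => (q (φ (ψ k)) : Gd → ℂ) ξ) atTop
            (𝓝 ((fL : Gd → ℂ) ξ)) := h1.comp (hψmono.tendsto_atTop)
        have h4 : Tendsto (fun k => (q (φ (ψ k)) : Gd → ℂ) ξ * (F a : Gd → ℂ) ξ) atTop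
            (𝓝 ((fL : Gd → ℂ) ξ * (F a : Gd → ℂ) ξ)) := h1'.mul_const _
        have h5 : (fun k => (w (φ (ψ k)) : Gd → ℂ) ξ)
            = fun k => (q (φ (ψ k)) : Gd → ℂ) ξ * (F a : Gd → ℂ) ξ := funext fun k => h3 _
        rw [h5] at h2
        exact (tendsto_nhds_unique h2 h4).trans rfl
      have hwinfnorm : ‖winf‖ ≤ C * ‖fL‖ := by
        have hnk : ∀ k, ‖w (φ (ψ k))‖ ≤ C * ‖q (φ (ψ k))‖ := fun k => by
          have h7 := hnormB (y (φ (ψ k)))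
          rwa [hyq] at h7
        have hlim1 : Tendsto (fun k => ‖w (φ (ψ k))‖) atTop (𝓝 ‖winf‖) :=
          (continuous_norm.tendsto _).comp (hwinf.comp ((hφmono.comp hψmono).tendsto_atTop))
        have hlim2 : Tendsto (fun k => C * ‖q (φ (ψ k))‖) atTop (𝓝 (C * ‖fL‖)) :=
          (((continuous_norm.tendsto _).comp
            (hqlim.comp ((hφmono.comp hψmono).tendsto_atTop)))).const_mul C
        exact le_of_tendsto_of_tendsto' hlim1 hlim2 hnk
      set t : ℝ≥0∞ := μ E ^ (1/(2:ℝ≥0∞).toReal) with htdef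
      have ht0 : t ≠ 0 := by
        rw [htdef]
        simp only [ne_eq, ENNReal.rpow_eq_zero_iff, not_or, not_and, not_lt]
        constructor
        · intro hc; exact absurd hc hμE
        · intro hc; exact absurd hc (measure_ne_top μ E)
      have httop : t ≠ ∞ := by
        rw [htdef]
        simp only [ne_eq, ENNReal.rpow_eq_top_iff, not_or, not_and, not_lt]
        constructor
        · intro hc; exact absurd hc hμE
        · intro hc; exact absurd hc (measure_ne_top μ E)
      have hflnorm : ENNReal.ofReal ‖fL‖ = t := by
        rw [hfLdef, Lp.norm_toLp, hfdef,
          eLpNorm_indicator_const hE (by norm_num) (by norm_num)]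
        simp only [enorm_one, one_mul]
        rw [ENNReal.ofReal_toReal httop]
      have hup : eLpNorm (winf : Gd → ℂ) 2 μ ≤ ENNReal.ofReal C * t := by
        have h1 : eLpNorm (winf : Gd → ℂ) 2 μ = ENNReal.ofReal ‖winf‖ := by
          rw [Lp.norm_def, ENNReal.ofReal_toReal (Lp.eLpNorm_lt_top _).ne]
        rw [h1, ← hflnorm, ← ENNReal.ofReal_mul hC0]
        exact ENNReal.ofReal_le_ofReal hwinfnorm
      have hlow : ENNReal.ofReal (C + ε) * t ≤ eLpNorm (winf : Gd → ℂ) 2 μ := by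
        have h2 : eLpNorm (E.indicator fun _ => ((C + ε : ℝ) : ℂ)) 2 μ
            ≤ eLpNorm (winf : Gd → ℂ) 2 μ := by
          apply eLpNorm_mono_ae
          filter_upwards [hwinfeq, hf2.coeFn_toLp, hab] with ξ e1 e2 e3
          rw [e1]
          by_cases hξ : ξ ∈ E
          · rw [Set.indicator_of_mem hξ]
            have hb2 : C + ε ≤ ‖b ξ‖ := hξ
            simp only [Pi.mul_apply]
            rw [e2, hfdef, Set.indicator_of_mem hξ, one_mul, e3]
            rw [Complex.norm_real]
            rw [Real.norm_eq_abs, _root_.abs_of_nonneg (by positivity : (0:ℝ) ≤ C + ε)]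
            exact hb2
          · rw [Set.indicator_of_notMem hξ]
            simp only [norm_zero]
            positivity
        have h3 : eLpNorm (E.indicator fun _ => ((C + ε : ℝ) : ℂ)) 2 μ
            = ENNReal.ofReal (C + ε) * t := by
          rw [eLpNorm_indicator_const hE (by norm_num) (by norm_num)]
          congr 1
          rw [← ofReal_norm, Complex.norm_real]
          rw [Real.norm_eq_abs, _root_.abs_of_nonneg (by positivity : (0:ℝ) ≤ C + ε)]
        rw [← h3]
        exact h2
      have hcontr := hlow.trans hup
      rw [ENNReal.mul_le_mul_iff_left ht0 httop] at hcontr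
      have hfin := (ENNReal.ofReal_le_ofReal_iff hC0).mp hcontr
      linarith
    have hae2 : ∀ᵐ ξ ∂μ, ‖b ξ‖ ≤ C := by
      rw [ae_iff]
      refine measure_mono_null ?_ (measure_iUnion_null hEk)
      intro ξ hξ
      rw [Set.mem_setOf_eq, not_le] at hξ
      obtain ⟨k, hk⟩ := exists_nat_one_div_lt (sub_pos.mpr hξ)
      exact Set.mem_iUnion.mpr ⟨k, by simp only [Set.mem_setOf_eq]; linarith⟩
    filter_upwards [hab, hae2] with ξ e1 e2
    rw [e1]
    exact e2
end
end

section
/- Let G be a discrete abelian group, π a unitary representation of G on a separable complex Hilbert space H, and φ₁,…,φ_N ∈ H. Define a_{m,n}(g) = ⟨φ_n, π_g φ_m⟩ and assume each a_{m,n} ∈ ℓ²(G). If the system {π_g φ_n : 1 ≤ n ≤ N, g ∈ G} is a Bessel sequence with bound β — i.e., ‖Σ_{n,g} x_n(g) π_g φ_n‖² ≤ β ‖x‖² for all finitely supported x ∈ ℓ²(G)^N — then for every x, y ∈ ℓ²(G)^N one has ⟨Σ_{n,g} x_n(g) π_g φ_n, Σ_{m,g} y_m(g) π_g φ_m⟩_H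 = ⟨A ∗ x, y⟩_{ℓ²(G)^N}, where A = [a_{m,n}], and the convolution operator x ↦ A ∗ x is bounded on ℓ²(G)^N. -/
open MeasureTheory Complex
open scoped ENNReal ComplexOrder

set_option maxHeartbeats 1000000
set_option synthInstance.maxHeartbeats 400000

noncomputable section

/-- The Bessel inequality with bound `β` for the system `{π_g φ_n}`, stated for finitely
supported coefficient vectors. -/
def besselBound {G : Type*} [AddCommGroup G]
    {H : Type*} [NormedAddCommGroup H] [InnerProductSpace ℂ H] {N : ℕ}
    (π : G → (H ≃ₗᵢ[ℂ] H)) (φ : Fin N → H) (β : ℝ) : Prop :=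
  ∀ x : Fin N → (G →₀ ℂ),
    ‖∑ n, (x n).sum fun g c => c • (π g) (φ n)‖ ^ 2 ≤
      β * ∑ n, ∑ g ∈ (x n).support, ‖x n g‖ ^ 2

/-- The synthesis sum `Σ_{n,g} x_n(g) π_g φ_n` for `x ∈ ℓ²(G)^N` (junk value if the family
is not summable). -/
def synth {G : Type*} [AddCommGroup G]
    {H : Type*} [NormedAddCommGroup H] [InnerProductSpace ℂ H] [CompleteSpace H] {N : ℕ}
    (π : G → (H ≃ₗᵢ[ℂ] H)) (φ : Fin N → H)
    (x : PiLp 2 (fun _ : Fin N => ell2 G)) : H :=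
  ∑' p : Fin N × G, ((x p.1 : G → ℂ) p.2) • (π p.2) (φ p.1)


lemma rpow_two_eq (t : ℝ) : t ^ ((2 : ℝ≥0∞).toReal) = t ^ 2 := by
  rw [ENNReal.toReal_ofNat, show ((2:ℝ)) = ((2:ℕ):ℝ) by norm_num, Real.rpow_natCast]

lemma summable_sq {G : Type*} [AddCommGroup G] {N : ℕ}
    (x : PiLp 2 (fun _ : Fin N => ell2 G)) :
    Summable (fun p : Fin N × G => ‖(x p.1 : G → ℂ) p.2‖ ^ 2) := by
  have hslice : ∀ n : Fin N, Summable (fun g : G => ‖(x n : G → ℂ) g‖ ^ 2) := by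
    intro n
    have h := lp.memℓp (x n)
    rw [memℓp_gen_iff (by norm_num : (0:ℝ) < (2 : ℝ≥0∞).toReal)] at h
    simpa [rpow_two_eq] using h
  rw [← (Equiv.sigmaEquivProd (Fin N) G).summable_iff]
  exact (summable_sigma_of_nonneg (fun q => sq_nonneg _)).mpr
    ⟨fun n => hslice n, Summable.of_finite⟩

section aux
variable {G : Type*} [AddCommGroup G]
    {H : Type*} [NormedAddCommGroup H] [InnerProductSpace ℂ H]
    {N : ℕ} {π : G → (H ≃ₗᵢ[ℂ] H)} {φ : Fin N → H}

lemma bessel_finset {β : ℝ} (hb : besselBound π φ β)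
    (c : Fin N × G → ℂ) (F : Finset (Fin N × G)) :
    ‖∑ p ∈ F, c p • (π p.2) (φ p.1)‖ ^ 2 ≤ β * ∑ p ∈ F, ‖c p‖ ^ 2 := by
  classical
  set s : Finset G := F.image Prod.snd with hs
  set c' : Fin N × G → ℂ := fun p => if p ∈ F then c p else 0 with hc'
  have hmem : ∀ n : Fin N, ∀ g, (fun g => c' (n, g)) g ≠ 0 → g ∈ s := by
    intro n g h
    by_contra hg
    apply h
    simp only [hc']
    rw [if_neg]
    intro hF
    exact hg (Finset.mem_image_of_mem Prod.snd hF)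
  set x : Fin N → (G →₀ ℂ) := fun n => Finsupp.onFinset s (fun g => c' (n, g)) (hmem n) with hx
  have key := hb x
  have hsub : F ⊆ Finset.univ ×ˢ s := by
    intro p hp
    rw [Finset.mem_product]
    exact ⟨Finset.mem_univ _, Finset.mem_image_of_mem Prod.snd hp⟩
  have hL : (∑ n, (x n).sum fun g cc => cc • (π g) (φ n)) = ∑ p ∈ F, c p • (π p.2) (φ p.1) := by
    have h1 : ∀ n, ((x n).sum fun g cc => cc • (π g) (φ n)) = ∑ g ∈ s, c' (n, g) • (π g) (φ n) := by
      intro n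
      refine Finsupp.sum_of_support_subset _ (Finsupp.support_onFinset_subset) _ ?_
      intro g _; simp
    simp_rw [h1]
    rw [← Finset.sum_product']
    have h2 : ∀ p ∈ Finset.univ ×ˢ s, c' p • (π p.2) (φ p.1)
        = if p ∈ F then c p • (π p.2) (φ p.1) else 0 := by
      intro p _
      simp only [hc']
      split <;> simp
    rw [Finset.sum_congr rfl h2, Finset.sum_ite_mem, Finset.inter_eq_right.mpr hsub]
  have hR : (∑ n, ∑ g ∈ (x n).support, ‖x n g‖ ^ 2) = ∑ p ∈ F, ‖c p‖ ^ 2 := by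
    have h1 : ∀ n : Fin N, (∑ g ∈ (x n).support, ‖x n g‖ ^ 2) = ∑ g ∈ s, ‖c' (n, g)‖ ^ 2 := by
      intro n
      rw [show (∑ g ∈ (x n).support, ‖x n g‖ ^ 2) = ∑ g ∈ (x n).support, ‖c' (n, g)‖ ^ 2 from rfl]
      refine Finset.sum_subset Finsupp.support_onFinset_subset ?_
      intro g _ hns
      have : x n g = 0 := Finsupp.notMem_support_iff.mp hns
      have hg0 : c' (n, g) = 0 := this
      rw [hg0]; simp
    simp_rw [h1]
    rw [← Finset.sum_product']
    have h2 : ∀ p ∈ Finset.univ ×ˢ s, ‖c' p‖ ^ 2 = if p ∈ F then ‖c p‖ ^ 2 else 0 := by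
      intro p _
      simp only [hc']
      split <;> simp
    rw [Finset.sum_congr rfl h2, Finset.sum_ite_mem, Finset.inter_eq_right.mpr hsub]
  rw [hL, hR] at key
  exact key

lemma summable_smul_aux [CompleteSpace H] {β : ℝ} (hβ : 0 ≤ β) (hb : besselBound π φ β)
    (x : PiLp 2 (fun _ : Fin N => ell2 G)) :
    Summable (fun p : Fin N × G => ((x p.1 : G → ℂ) p.2) • (π p.2) (φ p.1)) := by
  rw [summable_iff_vanishing]
  intro e he
  obtain ⟨ε, hε, hball⟩ := Metric.mem_nhds_iff.mp he
  have hsq := summable_sq x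
  obtain ⟨s, hs⟩ := (summable_iff_vanishing.mp hsq) (Metric.ball 0 (ε ^ 2 / (β + 1)))
    (Metric.ball_mem_nhds _ (by positivity))
  refine ⟨s, fun t ht => ?_⟩
  apply hball
  rw [Metric.mem_ball, dist_zero_right]
  have h2 := hs t ht
  rw [Metric.mem_ball, dist_zero_right, Real.norm_eq_abs] at h2
  have h3 : ∑ p ∈ t, ‖(x p.1 : G → ℂ) p.2‖ ^ 2 < ε ^ 2 / (β + 1) := lt_of_abs_lt h2
  have h4 : ‖∑ p ∈ t, ((x p.1 : G → ℂ) p.2) • (π p.2) (φ p.1)‖ ^ 2 < ε ^ 2 := by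
    calc ‖∑ p ∈ t, ((x p.1 : G → ℂ) p.2) • (π p.2) (φ p.1)‖ ^ 2
        ≤ β * ∑ p ∈ t, ‖(x p.1 : G → ℂ) p.2‖ ^ 2 := bessel_finset hb _ t
      _ ≤ β * (ε ^ 2 / (β + 1)) := mul_le_mul_of_nonneg_left h3.le hβ
      _ < ε ^ 2 := by
          rw [mul_div_assoc'] at *
          rw [div_lt_iff₀ (by positivity)]
          nlinarith [sq_nonneg ε, hε]
  exact lt_of_pow_lt_pow_left₀ 2 hε.le h4

lemma norm_synth_sq_le [CompleteSpace H] {β : ℝ} (hβ : 0 ≤ β) (hb : besselBound π φ β)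
    (x : PiLp 2 (fun _ : Fin N => ell2 G)) :
    ‖synth π φ x‖ ^ 2 ≤ β * ∑' p : Fin N × G, ‖(x p.1 : G → ℂ) p.2‖ ^ 2 := by
  have hsum := (summable_smul_aux hβ hb x).hasSum
  have htend : Filter.Tendsto
      (fun F : Finset (Fin N × G) => ‖∑ p ∈ F, ((x p.1 : G → ℂ) p.2) • (π p.2) (φ p.1)‖ ^ 2)
      Filter.atTop (nhds (‖synth π φ x‖ ^ 2)) :=
    (((continuous_pow 2).comp continuous_norm).continuousAt.tendsto).comp hsum
  refine le_of_tendsto htend (Filter.Eventually.of_forall fun F => ?_)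
  calc ‖∑ p ∈ F, ((x p.1 : G → ℂ) p.2) • (π p.2) (φ p.1)‖ ^ 2
      ≤ β * ∑ p ∈ F, ‖(x p.1 : G → ℂ) p.2‖ ^ 2 := bessel_finset hb _ F
    _ ≤ β * ∑' p : Fin N × G, ‖(x p.1 : G → ℂ) p.2‖ ^ 2 :=
        mul_le_mul_of_nonneg_left
          (Summable.sum_le_tsum F (fun p _ => sq_nonneg _) (summable_sq x)) hβ


lemma inner_rep (hπ : ∀ g g' : G, π (g + g') = (π g').trans (π g))
    {a : Fin N → Fin N → G → ℂ}
    (ha : ∀ m n g, a m n g = (inner ℂ ((π g) (φ m)) (φ n) : ℂ))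
    (m n : Fin N) (g g' : G) :
    (inner ℂ ((π g) (φ m)) ((π g') (φ n)) : ℂ) = a m n (g - g') := by
  have h := hπ g' (g - g')
  rw [show g' + (g - g') = g by abel] at h
  rw [ha, h]
  simp [LinearIsometryEquiv.trans_apply, LinearIsometryEquiv.inner_map_map]

lemma analysis_sum_le {β : ℝ} (hβ : 0 ≤ β) (hb : besselBound π φ β) (u : H)
    (F : Finset (Fin N × G)) :
    ∑ p ∈ F, ‖(inner ℂ ((π p.2) (φ p.1)) u : ℂ)‖ ^ 2 ≤ β * ‖u‖ ^ 2 := by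
  set c : Fin N × G → ℂ := fun p => inner ℂ ((π p.2) (φ p.1)) u with hcdef
  set r : ℝ := ∑ p ∈ F, ‖c p‖ ^ 2 with hr
  have hr0 : 0 ≤ r := Finset.sum_nonneg fun _ _ => sq_nonneg _
  set S : H := ∑ p ∈ F, c p • (π p.2) (φ p.1) with hS
  have hinner : (inner ℂ S u : ℂ) = (r : ℝ) := by
    rw [hS, sum_inner]
    simp_rw [inner_smul_left]
    have : ∀ p ∈ F, (starRingEnd ℂ) (c p) * (inner ℂ ((π p.2) (φ p.1)) u : ℂ)
        = ((‖c p‖ : ℂ)) ^ 2 := by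
      intro p _
      rw [show (inner ℂ ((π p.2) (φ p.1)) u : ℂ) = c p from rfl, Complex.conj_mul']
    rw [Finset.sum_congr rfl this, hr]
    push_cast
    ring
  have h1 : r ≤ ‖S‖ * ‖u‖ := by
    calc r = ‖(inner ℂ S u : ℂ)‖ := by
          rw [hinner, Complex.norm_real, Real.norm_eq_abs, (_root_.abs_of_nonneg hr0)]
      _ ≤ ‖S‖ * ‖u‖ := norm_inner_le_norm S u
  have h2 : ‖S‖ ^ 2 ≤ β * r := bessel_finset hb c F
  rcases hr0.eq_or_lt with h | h
  · rw [← h]; positivity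
  · have h3 : r * r ≤ (‖S‖ * ‖u‖) * (‖S‖ * ‖u‖) :=
      mul_le_mul h1 h1 hr0 (by positivity)
    nlinarith [mul_le_mul_of_nonneg_right h2 (sq_nonneg ‖u‖), h, norm_nonneg u]

lemma analysis_summable {β : ℝ} (hβ : 0 ≤ β) (hb : besselBound π φ β) (u : H) :
    Summable (fun p : Fin N × G => ‖(inner ℂ ((π p.2) (φ p.1)) u : ℂ)‖ ^ 2) :=
  summable_of_sum_le (fun p => sq_nonneg _) (analysis_sum_le hβ hb u)

lemma analysis_tsum_le {β : ℝ} (hβ : 0 ≤ β) (hb : besselBound π φ β) (u : H) :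
    ∑' p : Fin N × G, ‖(inner ℂ ((π p.2) (φ p.1)) u : ℂ)‖ ^ 2 ≤ β * ‖u‖ ^ 2 :=
  Summable.tsum_le_of_sum_le (analysis_summable hβ hb u) (analysis_sum_le hβ hb u)

lemma norm_sq_eq (x : PiLp 2 (fun _ : Fin N => ell2 G)) :
    ‖x‖ ^ 2 = ∑' p : Fin N × G, ‖(x p.1 : G → ℂ) p.2‖ ^ 2 := by
  rw [PiLp.norm_sq_eq_of_L2]
  have h : ∀ n : Fin N, ‖x n‖ ^ 2 = ∑' g, ‖(x n : G → ℂ) g‖ ^ 2 := by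
    intro n
    have := lp.norm_rpow_eq_tsum (p := 2) (by norm_num) (x n)
    simpa [rpow_two_eq] using this
  simp_rw [h]
  rw [Summable.tsum_prod' (summable_sq x) (fun n => (summable_sq x).prod_factor n), tsum_fintype]


lemma inner_synth [CompleteSpace H] {β : ℝ} (hβ : 0 ≤ β) (hb : besselBound π φ β)
    (hπ : ∀ g g' : G, π (g + g') = (π g').trans (π g))
    {a : Fin N → Fin N → G → ℂ}
    (ha : ∀ m n g, a m n g = (inner ℂ ((π g) (φ m)) (φ n) : ℂ))
    (x : PiLp 2 (fun _ : Fin N => ell2 G)) (m : Fin N) (g : G) :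
    (inner ℂ ((π g) (φ m)) (synth π φ x) : ℂ)
      = matConv a (fun n => (x n : G → ℂ)) m g := by
  have hsum := summable_smul_aux hβ hb x
  have hsum2 : Summable (fun q : Fin N × G => ((x q.1 : G → ℂ) q.2) * a m q.1 (g - q.2)) := by
    have h := hsum.map (innerSL ℂ ((π g) (φ m))).toLinearMap.toAddMonoidHom
      (innerSL ℂ ((π g) (φ m))).continuous
    refine h.congr fun q => ?_
    show (inner ℂ ((π g) (φ m)) (((x q.1 : G → ℂ) q.2) • (π q.2) (φ q.1)) : ℂ) = _
    rw [inner_smul_right, inner_rep hπ ha]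
  have h1 : (inner ℂ ((π g) (φ m)) (synth π φ x) : ℂ)
      = ∑' q : Fin N × G, ((x q.1 : G → ℂ) q.2) * a m q.1 (g - q.2) := by
    have hmap : (inner ℂ ((π g) (φ m))
          (∑' p : Fin N × G, ((x p.1 : G → ℂ) p.2) • (π p.2) (φ p.1)) : ℂ)
        = ∑' p : Fin N × G,
            (inner ℂ ((π g) (φ m)) (((x p.1 : G → ℂ) p.2) • (π p.2) (φ p.1)) : ℂ) :=
      (innerSL ℂ ((π g) (φ m))).map_tsum hsum
    rw [synth, hmap]
    refine tsum_congr fun q => ?_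
    show (inner ℂ ((π g) (φ m)) (((x q.1 : G → ℂ) q.2) • (π q.2) (φ q.1)) : ℂ) = _
    rw [inner_smul_right, inner_rep hπ ha]
  rw [h1, Summable.tsum_prod' hsum2 (fun n => hsum2.prod_factor n), tsum_fintype, matConv]
  refine Finset.sum_congr rfl fun n _ => ?_
  simp only [conv]
  rw [← Equiv.tsum_eq (Equiv.subLeft g) (fun g' => ((x n : G → ℂ) g') * a m n (g - g'))]
  refine tsum_congr fun h => ?_
  show ((x n : G → ℂ) (g - h)) * a m n (g - (g - h)) = a m n h * ((x n : G → ℂ) (g - h))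
  rw [sub_sub_cancel, mul_comm]


end aux

/-- identity (8) of the paper and boundedness of the Gram convolution
operator. If `{π_g φ_n}` is a Bessel sequence, then
`⟨Σ x_n(g) π_g φ_n, Σ y_m(g) π_g φ_m⟩ = ⟨A ∗ x, y⟩` for all `x, y ∈ ℓ²(G)^N`, and `x ↦ A ∗ x`
is bounded on `ℓ²(G)^N`. (Here `⟨u,v⟩` is linear in the first slot, i.e. `⟨u,v⟩ = ⟪v,u⟫` in
Mathlib's convention.) -/
theorem stmt_13 {G : Type*} [AddCommGroup G]
    {H : Type*} [NormedAddCommGroup H] [InnerProductSpace ℂ H] [CompleteSpace H]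
    [TopologicalSpace.SeparableSpace H] {N : ℕ}
    (π : G → (H ≃ₗᵢ[ℂ] H))
    (hπ : ∀ g g' : G, π (g + g') = (π g').trans (π g))
    (hπ0 : π (0 : G) = LinearIsometryEquiv.refl ℂ H)
    (φ : Fin N → H) (a : Fin N → Fin N → G → ℂ)
    (ha : ∀ m n g, a m n g = (inner ℂ ((π g) (φ m)) (φ n) : ℂ))
    (ha2 : ∀ m n, Memℓp (a m n) 2)
    (hB : ∃ β : ℝ, besselBound π φ β) :
    (∀ x y : PiLp 2 (fun _ : Fin N => ell2 G),
        (inner ℂ (synth π φ y) (synth π φ x) : ℂ) =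
          ∑' q : Fin N × G,
            matConv a (fun n => (x n : G → ℂ)) q.1 q.2 * star ((y q.1 : G → ℂ) q.2)) ∧
      ∃ C : ℝ, ∀ x : PiLp 2 (fun _ : Fin N => ell2 G),
        ∃ h : ∀ m, Memℓp (matConv a (fun n => (x n : G → ℂ)) m) 2,
          ‖(show PiLp 2 (fun _ : Fin N => ell2 G) from
              WithLp.toLp 2 (fun m => ⟨matConv a (fun n => (x n : G → ℂ)) m, h m⟩))‖ ≤ C * ‖x‖ := by
  obtain ⟨β₀, hb₀⟩ := hB
  set β : ℝ := max β₀ 0 with hβdef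
  have hβ : (0:ℝ) ≤ β := le_max_right _ _
  have hb : besselBound π φ β := by
    intro z
    refine le_trans (hb₀ z) (mul_le_mul_of_nonneg_right (le_max_left _ _) ?_)
    exact Finset.sum_nonneg fun n _ => Finset.sum_nonneg fun g _ => sq_nonneg _
  constructor
  · intro x y
    have hy := summable_smul_aux hβ hb y
    have h1 : (inner ℂ (synth π φ y) (synth π φ x) : ℂ)
        = star (inner ℂ (synth π φ x) (synth π φ y) : ℂ) := by
      rw [← inner_conj_symm, starRingEnd_apply]
    have hmap : (inner ℂ (synth π φ x)
          (∑' p : Fin N × G, ((y p.1 : G → ℂ) p.2) • (π p.2) (φ p.1)) : ℂ)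
        = ∑' p : Fin N × G,
            (inner ℂ (synth π φ x) (((y p.1 : G → ℂ) p.2) • (π p.2) (φ p.1)) : ℂ) :=
      (innerSL ℂ (synth π φ x)).map_tsum hy
    rw [h1, show (synth π φ y)
        = ∑' p : Fin N × G, ((y p.1 : G → ℂ) p.2) • (π p.2) (φ p.1) from rfl,
      hmap, tsum_star]
    refine tsum_congr fun q => ?_
    have h2 : (inner ℂ (synth π φ x) (((y q.1 : G → ℂ) q.2) • (π q.2) (φ q.1)) : ℂ)
        = ((y q.1 : G → ℂ) q.2) * (inner ℂ (synth π φ x) ((π q.2) (φ q.1)) : ℂ) :=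
      inner_smul_right _ _ _
    rw [h2, star_mul']
    rw [show star (inner ℂ (synth π φ x) ((π q.2) (φ q.1)) : ℂ)
        = (inner ℂ ((π q.2) (φ q.1)) (synth π φ x) : ℂ) from inner_conj_symm _ _]
    rw [inner_synth hβ hb hπ ha x q.1 q.2]
    ring
  · refine ⟨β, fun x => ?_⟩
    have hkey : ∀ p : Fin N × G, matConv a (fun n => (x n : G → ℂ)) p.1 p.2
        = (inner ℂ ((π p.2) (φ p.1)) (synth π φ x) : ℂ) :=
      fun p => (inner_synth hβ hb hπ ha x p.1 p.2).symm
    have hsum : Summable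
        (fun p : Fin N × G => ‖matConv a (fun n => (x n : G → ℂ)) p.1 p.2‖ ^ 2) := by
      simp_rw [hkey]; exact analysis_summable hβ hb _
    have hmem : ∀ m, Memℓp (matConv a (fun n => (x n : G → ℂ)) m) 2 := by
      intro m
      apply memℓp_gen
      simp_rw [rpow_two_eq]
      exact hsum.prod_factor m
    refine ⟨hmem, ?_⟩
    have hX2 : ‖(show PiLp 2 (fun _ : Fin N => ell2 G) from
          WithLp.toLp 2 (fun m => ⟨matConv a (fun n => (x n : G → ℂ)) m, hmem m⟩))‖ ^ 2
        = ∑' p : Fin N × G, ‖matConv a (fun n => (x n : G → ℂ)) p.1 p.2‖ ^ 2 :=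
      norm_sq_eq _
    have h2 : ∑' p : Fin N × G, ‖matConv a (fun n => (x n : G → ℂ)) p.1 p.2‖ ^ 2
        ≤ β * ‖synth π φ x‖ ^ 2 := by
      simp_rw [hkey]; exact analysis_tsum_le hβ hb _
    have h3 : ‖synth π φ x‖ ^ 2 ≤ β * ‖x‖ ^ 2 := by
      have := norm_synth_sq_le hβ hb x
      rwa [← norm_sq_eq x] at this
    have h4 : ‖(show PiLp 2 (fun _ : Fin N => ell2 G) from
          WithLp.toLp 2 (fun m => ⟨matConv a (fun n => (x n : G → ℂ)) m, hmem m⟩))‖ ^ 2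
        ≤ (β * ‖x‖) ^ 2 := by
      rw [hX2]
      nlinarith [mul_le_mul_of_nonneg_left h3 hβ, norm_nonneg x]
    exact le_of_pow_le_pow_left₀ two_ne_zero (by positivity) h4
end
end
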